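/- (Lemma 6, second part) Suppose in addition that each g_k(x, θ) is linear in x (i.e., each v_k : ℝ^m → ℝ^d is a linear map) and that Y ⊆ ℝ^m is a nonempty convex set. Then for any λ ≥ 0 and positive definite Σ, S(λ, Y; Σ) = (⋂_{k=1}^K (λU_Σ + C_k^+(Y))) ∩ (⋂_{k=1}^K (λU_Σ + C_k^−(Y))), where + denotes Minkowski sum. -/

import Mathlib

open MeasureTheory ProbabilityTheory Matrix
open scoped ENNReal Pointwise

/-- The ellipsoid `U_Σ = {u : uᵀ Σ⁻¹ u ≤ 1}`. -/
def USet {d : ℕ} (Sg : Matrix (Fin d) (Fin d) ℝ) : Set (Fin d → ℝ) :=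
  {u | u ⬝ᵥ (Sg⁻¹ *ᵥ u) ≤ 1}

/-- `r_k(x; Σ) = max_{u ∈ U_Σ} g_k(x, u)` where `g_k(x, θ) = θᵀ v_k(x)`. -/
noncomputable def rk {d m K : ℕ} (v : Fin K → (Fin m → ℝ) → (Fin d → ℝ))
    (k : Fin K) (x : Fin m → ℝ) (Sg : Matrix (Fin d) (Fin d) ℝ) : ℝ :=
  sSup ((fun u => u ⬝ᵥ v k x) '' USet Sg)

/-- `S(λ, Y; Σ)`, the set of parameter errors that are uniformly small over `Y`. -/
noncomputable def SErr {d m K : ℕ} (v : Fin K → (Fin m → ℝ) → (Fin d → ℝ))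
    (lam : ℝ) (Y : Set (Fin m → ℝ)) (Sg : Matrix (Fin d) (Fin d) ℝ) : Set (Fin d → ℝ) :=
  {Δ | ∀ k, ∀ y ∈ Y, |Δ ⬝ᵥ v k y| ≤ lam * rk v k y Sg}

/-- Feasibility for the robust optimization problem with scale `lam`, center `θ`, shape `Σ`. -/
def Feasible {d m K : ℕ} (X : Set (Fin m → ℝ)) (v : Fin K → (Fin m → ℝ) → (Fin d → ℝ))
    (lam : ℝ) (θ : Fin d → ℝ) (Sg : Matrix (Fin d) (Fin d) ℝ) (x : Fin m → ℝ) : Prop :=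
  x ∈ X ∧ ∀ k, ∀ u ∈ USet Sg, 0 ≤ (θ + lam • u) ⬝ᵥ v k x

/-- Optimal solution of the robust optimization problem. -/
def IsOptimal {d m K : ℕ} (X : Set (Fin m → ℝ)) (f : (Fin m → ℝ) → ℝ)
    (v : Fin K → (Fin m → ℝ) → (Fin d → ℝ))
    (lam : ℝ) (θ : Fin d → ℝ) (Sg : Matrix (Fin d) (Fin d) ℝ) (x : Fin m → ℝ) : Prop :=
  Feasible X v lam θ Sg x ∧ ∀ y, Feasible X v lam θ Sg y → f x ≤ f y

open Classical in
/-- The true objective `f*`, which is `∞` when a true constraint is violated. -/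
noncomputable def fStar {d m K : ℕ} (f : (Fin m → ℝ) → ℝ)
    (v : Fin K → (Fin m → ℝ) → (Fin d → ℝ)) (θs : Fin d → ℝ) (x : Fin m → ℝ) : EReal :=
  if ∀ k, 0 ≤ θs ⬝ᵥ v k x then (f x : EReal) else ⊤

/-- The standard Gaussian measure on `ℝ^d`. -/
noncomputable def stdGaussian (d : ℕ) : Measure (Fin d → ℝ) :=
  Measure.pi fun _ => gaussianReal 0 1

open Classical in
/-- The positive semidefinite square root (junk value `0` off the psd cone). -/
noncomputable def matSqrt {d : ℕ} (A : Matrix (Fin d) (Fin d) ℝ) : Matrix (Fin d) (Fin d) ℝ :=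
  if h : A.PosSemidef then
    h.1.eigenvectorUnitary.1 * diagonal ((↑) ∘ (h.1.eigenvalues · |>.sqrt)) *
      (star h.1.eigenvectorUnitary : Matrix (Fin d) (Fin d) ℝ) else 0

/-- The centered Gaussian measure on `ℝ^d` with covariance `A`. -/
noncomputable def gaussOf {d : ℕ} (A : Matrix (Fin d) (Fin d) ℝ) : Measure (Fin d → ℝ) :=
  (stdGaussian d).map (fun z => matSqrt A *ᵥ z)

/-- The Euclidean norm on `Fin d → ℝ`. -/
noncomputable def euclNorm {d : ℕ} (z : Fin d → ℝ) : ℝ := Real.sqrt (∑ i, z i ^ 2)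

/-- Quantile function of the chi distribution with `d` degrees of freedom. -/
noncomputable def chiQuantile (d : ℕ) (p : ℝ) : ℝ :=
  sInf {t : ℝ | 0 ≤ t ∧ p ≤ (stdGaussian d {z | euclNorm z ≤ t}).toReal}

/-- The minimum spatial uniform bound `μ(p, Y; P, Σ)` (`⊤` when infeasible, `0` for `p ≤ 0`). -/
noncomputable def muB {d m K : ℕ} (v : Fin K → (Fin m → ℝ) → (Fin d → ℝ)) (p : ℝ)
    (Y : Set (Fin m → ℝ)) (P : Measure (Fin d → ℝ)) (Sg : Matrix (Fin d) (Fin d) ℝ) : ℝ≥0∞ :=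
  ⨅ (μ : ℝ) (_ : 0 ≤ μ ∧ ENNReal.ofReal p ≤ P (SErr v μ Y Sg)), ENNReal.ofReal μ

/-- The polar cone `C_k^+(Y) = {Δ : Δᵀ v_k(y) ≥ 0 for all y ∈ Y}`. -/
def Cplus {d m K : ℕ} (v : Fin K → (Fin m → ℝ) → (Fin d → ℝ)) (k : Fin K)
    (Y : Set (Fin m → ℝ)) : Set (Fin d → ℝ) :=
  {Δ | ∀ y ∈ Y, 0 ≤ Δ ⬝ᵥ v k y}

/-- The dual cone `C_k^−(Y) = {Δ : Δᵀ v_k(y) ≤ 0 for all y ∈ Y}`. -/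
def Cminus {d m K : ℕ} (v : Fin K → (Fin m → ℝ) → (Fin d → ℝ)) (k : Fin K)
    (Y : Set (Fin m → ℝ)) : Set (Fin d → ℝ) :=
  {Δ | ∀ y ∈ Y, Δ ⬝ᵥ v k y ≤ 0}


section Stmt6Aux

open scoped RealInnerProductSpace

/-- Euclidean norm on `Fin d → ℝ` via `EuclideanSpace`. -/
noncomputable def enormAux {d : ℕ} (x : Fin d → ℝ) : ℝ :=
  ‖WithLp.toLp 2 x‖

lemma dotAux_eq_inner {d : ℕ} (x y : Fin d → ℝ) :
    x ⬝ᵥ y = @inner ℝ (EuclideanSpace ℝ (Fin d)) _ (WithLp.toLp 2 x) (WithLp.toLp 2 y) := by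
  simp [dotProduct, PiLp.inner_apply, RCLike.inner_apply, mul_comm]

lemma dotAux_self_eq {d : ℕ} (x : Fin d → ℝ) : x ⬝ᵥ x = enormAux x ^ 2 := by
  rw [dotAux_eq_inner]
  exact real_inner_self_eq_norm_sq _

lemma dotAux_le_enorm {d : ℕ} (x y : Fin d → ℝ) : x ⬝ᵥ y ≤ enormAux x * enormAux y := by
  rw [dotAux_eq_inner]
  exact real_inner_le_norm _ _

lemma enormAux_smul {d : ℕ} (c : ℝ) (x : Fin d → ℝ) : enormAux (c • x) = |c| * enormAux x := by
  unfold enormAux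
  rw [show WithLp.toLp 2 (c • x)
      = c • WithLp.toLp 2 x from rfl, norm_smul, Real.norm_eq_abs]

lemma enormAux_nonneg {d : ℕ} (x : Fin d → ℝ) : 0 ≤ enormAux x := norm_nonneg _

lemma enormAux_neg {d : ℕ} (x : Fin d → ℝ) : enormAux (-x) = enormAux x := norm_neg (WithLp.toLp 2 x)

lemma enormAux_eq_zero {d : ℕ} {x : Fin d → ℝ} (h : enormAux x = 0) : x = 0 := by
  have h2 : WithLp.toLp 2 x = 0 := norm_eq_zero.mp h
  exact congrArg WithLp.ofLp h2

lemma symdotAux {d : ℕ} (M : Matrix (Fin d) (Fin d) ℝ) (x y : Fin d → ℝ) :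
    (M *ᵥ x) ⬝ᵥ y = x ⬝ᵥ (Mᵀ *ᵥ y) := by
  rw [Matrix.dotProduct_mulVec, Matrix.vecMul_transpose]

lemma exists_proj_aux {F : Type*} [NormedAddCommGroup F] [InnerProductSpace ℝ F]
    [CompleteSpace F]
    (W : Set F) (hWne : W.Nonempty) (hWc : Convex ℝ W) (lam : ℝ) (hlam : 0 ≤ lam) (Δ : F)
    (h : ∀ w ∈ W, -(lam * ‖w‖) ≤ ⟪Δ, w⟫) :
    ∃ b : F, ‖b‖ ≤ lam ∧ ∀ w ∈ W, 0 ≤ ⟪Δ - b, w⟫ := by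
  set K₀ : Set F := {z | ∃ t : ℝ, 0 ≤ t ∧ ∃ w ∈ W, z = t • (-w)} with hK₀def
  obtain ⟨w₀, hw₀⟩ := hWne
  have h0K₀ : (0 : F) ∈ K₀ := ⟨0, le_refl 0, w₀, hw₀, by simp⟩
  have hK₀c : Convex ℝ K₀ := by
    rintro z₁ ⟨t₁, ht₁, w₁, hw₁, rfl⟩ z₂ ⟨t₂, ht₂, w₂, hw₂, rfl⟩ a b ha hb hab
    rcases eq_or_lt_of_le (by positivity : (0:ℝ) ≤ a * t₁ + b * t₂) with hs | hs
    · have h1 : a * t₁ = 0 := by nlinarith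
      have h2 : b * t₂ = 0 := by nlinarith
      exact ⟨0, le_refl 0, w₁, hw₁, by simp [smul_smul, h1, h2]⟩
    · refine ⟨a * t₁ + b * t₂, hs.le,
        (a * t₁ / (a * t₁ + b * t₂)) • w₁ + (b * t₂ / (a * t₁ + b * t₂)) • w₂,
        hWc hw₁ hw₂ (by positivity) (by positivity) (by field_simp), ?_⟩
      match_scalars <;> field_simp <;> ring
  have hK₀smul : ∀ (c : ℝ), 0 ≤ c → ∀ z ∈ K₀, c • z ∈ K₀ := by
    rintro c hc z ⟨t, ht, w, hw, rfl⟩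
    exact ⟨c * t, by positivity, w, hw, by rw [smul_smul]⟩
  have hKc : Convex ℝ (closure K₀) := hK₀c.closure
  obtain ⟨b, hbK, hbmin⟩ := exists_norm_eq_iInf_of_complete_convex
    ⟨0, subset_closure h0K₀⟩ isClosed_closure.isComplete hKc Δ
  rw [norm_eq_iInf_iff_real_inner_le_zero hKc hbK] at hbmin
  have h2b : (2 : ℝ) • b ∈ closure K₀ :=
    map_mem_closure (continuous_const_smul (2:ℝ)) hbK
      (fun z hz => hK₀smul 2 (by norm_num) z hz)
  have hb0 : ⟪Δ - b, b⟫ = 0 := by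
    have e1 := hbmin 0 (subset_closure h0K₀)
    have e2 := hbmin ((2:ℝ) • b) h2b
    rw [zero_sub, inner_neg_right] at e1
    have h2bb : ((2:ℝ) • b - b) = b := by module
    rw [h2bb] at e2
    linarith
  have hpos : ∀ w ∈ W, 0 ≤ ⟪Δ - b, w⟫ := by
    intro w hw
    have hm : -w ∈ K₀ := ⟨1, zero_le_one, w, hw, by simp⟩
    have := hbmin (-w) (subset_closure hm)
    rw [inner_sub_right, inner_neg_right, hb0] at this
    linarith
  have hcl : ∀ z ∈ closure K₀, ⟪Δ, z⟫ ≤ lam * ‖z‖ := by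
    have hsub : K₀ ⊆ {z | ⟪Δ, z⟫ ≤ lam * ‖z‖} := by
      rintro z ⟨t, ht, w, hw, rfl⟩
      have hn : ‖t • (-w)‖ = t * ‖w‖ := by
        rw [norm_smul, norm_neg, Real.norm_eq_abs, abs_of_nonneg ht]
      simp only [Set.mem_setOf_eq]
      rw [inner_smul_right, inner_neg_right, hn]
      have := h w hw
      nlinarith
    have hclosed : IsClosed {z : F | ⟪Δ, z⟫ ≤ lam * ‖z‖} :=
      isClosed_le (Continuous.inner continuous_const continuous_id)
        (continuous_const.mul continuous_norm)
    exact fun z hz => closure_minimal hsub hclosed hz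
  have hΔb : ⟪Δ, b⟫ = ‖b‖ ^ 2 := by
    have hsplit : ⟪Δ, b⟫ = ⟪Δ - b, b⟫ + ⟪b, b⟫ := by rw [inner_sub_left]; ring
    rw [hsplit, hb0, real_inner_self_eq_norm_sq]; ring
  have hnb : ‖b‖ ≤ lam := by
    have h1 := hcl b hbK
    rw [hΔb] at h1
    rcases eq_or_lt_of_le (norm_nonneg b) with h0 | h0
    · rw [← h0]; exact hlam
    · nlinarith
  exact ⟨b, hnb, hpos⟩

end Stmt6Aux

/-- Lemma 6, second part: when each `g_k` is linear in `x` and `Y` is a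
nonempty convex set, `S(λ, Y; Σ)` is the displayed intersection of Minkowski sums. -/
theorem stmt6 {d m K : ℕ} (hd : 1 ≤ d) (hm : 1 ≤ m) (hK : 1 ≤ K)
    (v : Fin K → (Fin m → ℝ) → (Fin d → ℝ))
    (hlin : ∀ k, IsLinearMap ℝ (v k))
    (Y : Set (Fin m → ℝ)) (hYne : Y.Nonempty) (hYconv : Convex ℝ Y)
    (lam : ℝ) (hlam : 0 ≤ lam)
    (Sg : Matrix (Fin d) (Fin d) ℝ) (hSg : Sg.PosDef) :
    SErr v lam Y Sg =
      (⋂ k, (lam • USet Sg + Cplus v k Y)) ∩ (⋂ k, (lam • USet Sg + Cminus v k Y)) := by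
    classical
  obtain ⟨R, hRR, hRsym⟩ : ∃ R : Matrix (Fin d) (Fin d) ℝ, R * R = Sg ∧ Rᵀ = R := by
    open scoped MatrixOrder in
    refine ⟨CFC.sqrt Sg, CFC.sqrt_mul_sqrt_self Sg hSg.posSemidef.nonneg, ?_⟩
    open scoped MatrixOrder in
    have h := (CFC.sqrt_nonneg Sg).posSemidef.isHermitian
    rwa [Matrix.IsHermitian, Matrix.conjTranspose_eq_transpose_of_trivial] at h
  have hdet : IsUnit R.det := by
    have hdpos : 0 < Sg.det := hSg.det_pos
    rw [← hRR, Matrix.det_mul] at hdpos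
    exact isUnit_iff_ne_zero.mpr (fun h0 => by rw [h0] at hdpos; simp at hdpos)
  have hR1 : R * R⁻¹ = 1 := Matrix.mul_nonsing_inv _ hdet
  have hR2 : R⁻¹ * R = 1 := Matrix.nonsing_inv_mul _ hdet
  have hRisym : R⁻¹ᵀ = R⁻¹ := by rw [Matrix.transpose_nonsing_inv, hRsym]
  have hRRu : ∀ u : Fin d → ℝ, R *ᵥ (R⁻¹ *ᵥ u) = u := fun u => by
    rw [Matrix.mulVec_mulVec, hR1, Matrix.one_mulVec]
  have hRRu' : ∀ u : Fin d → ℝ, R⁻¹ *ᵥ (R *ᵥ u) = u := fun u => by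
    rw [Matrix.mulVec_mulVec, hR2, Matrix.one_mulVec]
  have hdotR : ∀ x w : Fin d → ℝ, (R *ᵥ x) ⬝ᵥ w = x ⬝ᵥ (R *ᵥ w) := fun x w => by
    rw [symdotAux, hRsym]
  have hdotRi : ∀ x w : Fin d → ℝ, (R⁻¹ *ᵥ x) ⬝ᵥ w = x ⬝ᵥ (R⁻¹ *ᵥ w) := fun x w => by
    rw [symdotAux, hRisym]
  have hmemU : ∀ u : Fin d → ℝ, u ∈ USet Sg ↔ (R⁻¹ *ᵥ u) ⬝ᵥ (R⁻¹ *ᵥ u) ≤ 1 := by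
    intro u
    have hSi : Sg⁻¹ = R⁻¹ * R⁻¹ := by rw [← hRR, Matrix.mul_inv_rev]
    have : u ⬝ᵥ (Sg⁻¹ *ᵥ u) = (R⁻¹ *ᵥ u) ⬝ᵥ (R⁻¹ *ᵥ u) := by
      rw [hSi, ← Matrix.mulVec_mulVec, hdotRi]
    constructor
    · intro hu; rw [← this]; exact hu
    · intro hu; show u ⬝ᵥ (Sg⁻¹ *ᵥ u) ≤ 1; rw [this]; exact hu
  have hU0 : (0 : Fin d → ℝ) ∈ USet Sg := by
    show (0 : Fin d → ℝ) ⬝ᵥ (Sg⁻¹ *ᵥ 0) ≤ 1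
    rw [zero_dotProduct]; norm_num
  have hUneg : ∀ u : Fin d → ℝ, u ∈ USet Sg → -u ∈ USet Sg := by
    intro u hu
    show (-u) ⬝ᵥ (Sg⁻¹ *ᵥ (-u)) ≤ 1
    rw [Matrix.mulVec_neg, neg_dotProduct, dotProduct_neg, neg_neg]
    exact hu
  have hub : ∀ (w : Fin d → ℝ), ∀ u ∈ USet Sg, u ⬝ᵥ w ≤ enormAux (R *ᵥ w) := by
    intro w u hu
    have h1 : u ⬝ᵥ w = (R⁻¹ *ᵥ u) ⬝ᵥ (R *ᵥ w) := by
      conv_lhs => rw [← hRRu u]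
      rw [hdotR]
    have h2 : enormAux (R⁻¹ *ᵥ u) ≤ 1 := by
      have := (hmemU u).mp hu
      rw [dotAux_self_eq] at this
      nlinarith [enormAux_nonneg (R⁻¹ *ᵥ u)]
    calc u ⬝ᵥ w = (R⁻¹ *ᵥ u) ⬝ᵥ (R *ᵥ w) := h1
      _ ≤ enormAux (R⁻¹ *ᵥ u) * enormAux (R *ᵥ w) := dotAux_le_enorm _ _
      _ ≤ 1 * enormAux (R *ᵥ w) := by
          exact mul_le_mul_of_nonneg_right h2 (enormAux_nonneg _)
      _ = enormAux (R *ᵥ w) := one_mul _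
  have hbdd : ∀ (k : Fin K) (y : Fin m → ℝ),
      BddAbove ((fun u => u ⬝ᵥ v k y) '' USet Sg) := by
    intro k y
    exact ⟨enormAux (R *ᵥ v k y), by rintro z ⟨u, hu, rfl⟩; exact hub _ u hu⟩
  have hrk_le : ∀ (k : Fin K) (y : Fin m → ℝ), rk v k y Sg ≤ enormAux (R *ᵥ v k y) := by
    intro k y
    exact csSup_le ⟨(0 : Fin d → ℝ) ⬝ᵥ v k y, 0, hU0, rfl⟩
      (by rintro z ⟨u, hu, rfl⟩; exact hub _ u hu)
  have hle_rk : ∀ (k : Fin K) (y : Fin m → ℝ), ∀ u ∈ USet Sg, u ⬝ᵥ v k y ≤ rk v k y Sg := by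
    intro k y u hu
    exact le_csSup (hbdd k y) ⟨u, hu, rfl⟩
  have hball : ∀ b : Fin d → ℝ, enormAux b ≤ lam → R *ᵥ b ∈ lam • USet Sg := by
    intro b hb
    rcases eq_or_lt_of_le hlam with h0 | h0
    · have hb0 : b = 0 := enormAux_eq_zero (le_antisymm (h0 ▸ hb) (enormAux_nonneg b))
      rw [hb0, Matrix.mulVec_zero]
      exact Set.mem_smul_set.mpr ⟨0, hU0, smul_zero _⟩
    · refine Set.mem_smul_set.mpr ⟨R *ᵥ (lam⁻¹ • b), ?_, ?_⟩
      · rw [hmemU, hRRu', dotAux_self_eq, enormAux_smul,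
          abs_of_nonneg (inv_nonneg.mpr hlam)]
        have h1 : lam⁻¹ * enormAux b ≤ 1 := by
          rw [← inv_mul_cancel₀ h0.ne']
          exact mul_le_mul_of_nonneg_left hb (inv_nonneg.mpr hlam)
        nlinarith [enormAux_nonneg b, inv_nonneg.mpr hlam, mul_nonneg (inv_nonneg.mpr hlam) (enormAux_nonneg b)]
      · rw [← Matrix.mulVec_smul, smul_smul, mul_inv_cancel₀ h0.ne', one_smul]
  -- common construction for the hard direction
  have main : ∀ (k : Fin K) (Δ₀ : Fin d → ℝ),
      (∀ y ∈ Y, -(lam * rk v k y Sg) ≤ Δ₀ ⬝ᵥ v k y) →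
      ∃ b c : Fin d → ℝ, enormAux b ≤ lam ∧ (∀ y ∈ Y, 0 ≤ c ⬝ᵥ v k y) ∧
        Δ₀ = R *ᵥ b + c := by
    intro k Δ₀ hg
    set W : Set (EuclideanSpace ℝ (Fin d)) := (fun y => WithLp.toLp 2 (R *ᵥ v k y)) '' Y with hWdef
    have hWne : W.Nonempty := hYne.image _
    have hWc : Convex ℝ W := by
      have hL : IsLinearMap ℝ (fun y => WithLp.toLp 2 (R *ᵥ v k y)) := by
        constructor
        · intro a b; rw [(hlin k).map_add, Matrix.mulVec_add]; rfl
        · intro c a; rw [(hlin k).map_smul, Matrix.mulVec_smul]; rfl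
      exact hYconv.is_linear_image hL
    have key := exists_proj_aux (F := EuclideanSpace ℝ (Fin d)) W hWne hWc lam hlam
      (WithLp.toLp 2 (R⁻¹ *ᵥ Δ₀)) ?_
    · obtain ⟨b, hb1, hb2⟩ := key
      refine ⟨b.ofLp, Δ₀ - R *ᵥ b.ofLp, hb1, ?_, by abel⟩
      intro y hy
      have h2 := hb2 (WithLp.toLp 2 (R *ᵥ v k y)) ⟨y, hy, rfl⟩
      have h2' : 0 ≤ ((R⁻¹ *ᵥ Δ₀) - b.ofLp) ⬝ᵥ (R *ᵥ v k y) := by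
        rw [dotAux_eq_inner]; exact h2
      have expand : (Δ₀ - R *ᵥ b) ⬝ᵥ v k y
          = ((R⁻¹ *ᵥ Δ₀) - b.ofLp) ⬝ᵥ (R *ᵥ v k y) := by
        rw [← hdotR ((R⁻¹ *ᵥ Δ₀) - b.ofLp) (v k y),
          Matrix.mulVec_sub, hRRu]
      rw [expand]
      exact h2'
    · rintro w ⟨y, hy, rfl⟩
      have hin : @inner ℝ (EuclideanSpace ℝ (Fin d)) _ (WithLp.toLp 2 (R⁻¹ *ᵥ Δ₀)) (WithLp.toLp 2 (R *ᵥ v k y))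
          = Δ₀ ⬝ᵥ v k y := by
        rw [← dotAux_eq_inner, hdotRi, hRRu']
      show -(lam * enormAux (R *ᵥ v k y))
        ≤ @inner ℝ (EuclideanSpace ℝ (Fin d)) _ (WithLp.toLp 2 (R⁻¹ *ᵥ Δ₀)) (WithLp.toLp 2 (R *ᵥ v k y))
      rw [hin]
      have h1 := hg y hy
      have h2 : lam * rk v k y Sg ≤ lam * enormAux (R *ᵥ v k y) :=
        mul_le_mul_of_nonneg_left (hrk_le k y) hlam
      linarith
  ext Δ
  simp only [SErr, Set.mem_setOf_eq, Set.mem_inter_iff, Set.mem_iInter]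
  constructor
  · intro hΔ
    constructor
    · intro k
      obtain ⟨b, c, hb, hc, heq⟩ := main k Δ
        (fun y hy => (abs_le.mp (hΔ k y hy)).1)
      exact Set.mem_add.mpr ⟨R *ᵥ b, hball b hb, c, hc, heq.symm⟩
    · intro k
      have hneg : ∀ y ∈ Y, -(lam * rk v k y Sg) ≤ (-Δ) ⬝ᵥ v k y := by
        intro y hy
        rw [neg_dotProduct]
        have := (abs_le.mp (hΔ k y hy)).2
        linarith
      obtain ⟨b, c, hb, hc, heq⟩ := main k (-Δ) hneg
      refine Set.mem_add.mpr ⟨R *ᵥ (-b), hball (-b) (by rw [enormAux_neg]; exact hb),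
        -c, fun y hy => ?_, ?_⟩
      · show (-c) ⬝ᵥ v k y ≤ 0
        rw [neg_dotProduct]
        linarith [hc y hy]
      · rw [Matrix.mulVec_neg, ← neg_add, ← heq, neg_neg]
  · rintro ⟨hp, hmn⟩ k y hy
    obtain ⟨a, ha, c, hc, hsum⟩ := Set.mem_add.mp (hp k)
    obtain ⟨u, hu, rfl⟩ := Set.mem_smul_set.mp ha
    obtain ⟨a', ha', c', hc', hsum'⟩ := Set.mem_add.mp (hmn k)
    obtain ⟨u', hu', rfl⟩ := Set.mem_smul_set.mp ha'
    have hu1 : -(rk v k y Sg) ≤ u ⬝ᵥ v k y := by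
      have h1 : (-u) ⬝ᵥ v k y ≤ rk v k y Sg := hle_rk k y (-u) (hUneg u hu)
      rw [neg_dotProduct] at h1
      linarith
    have hu2 : u' ⬝ᵥ v k y ≤ rk v k y Sg := hle_rk k y u' hu'
    have hd1 : Δ ⬝ᵥ v k y = lam * (u ⬝ᵥ v k y) + c ⬝ᵥ v k y := by
      rw [← hsum, add_dotProduct, smul_dotProduct, smul_eq_mul]
    have hd2 : Δ ⬝ᵥ v k y = lam * (u' ⬝ᵥ v k y) + c' ⬝ᵥ v k y := by
      rw [← hsum', add_dotProduct, smul_dotProduct, smul_eq_mul]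
    rw [abs_le]
    constructor
    · have hcv := hc y hy
      nlinarith [mul_le_mul_of_nonneg_left hu1 hlam]
    · have hcv := hc' y hy
      nlinarith [mul_le_mul_of_nonneg_left hu2 hlam]
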